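/- Let A, B, a, b be positive integers with a ≥ 2 and A ≤ 2B. Then A·(d₂ + c₂·log₂(a − 1)) + A + B ≤ (A + B)·(d₂ − 1 + c₂·log₂(a + b)), where c₂ = 3/log₂(27/4) and d₂ = 6 − c₂·(3·log₂ 3 − 1). -/

import Mathlib

open Real

/-- The constant `c₂ = 3 / log₂(27/4)`. -/
noncomputable def c2 : ℝ := 3 / logb 2 (27 / 4)

/-- The constant `d₂ = 6 − c₂·(3·log₂ 3 − 1)`. -/
noncomputable def d2 : ℝ := 6 - c2 * (3 * logb 2 3 - 1)

lemma logb274 : logb 2 (27/4) = (3 * Real.log 3 - 2 * Real.log 2) / Real.log 2 := by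
  rw [Real.logb]
  congr 1
  rw [show (27:ℝ)/4 = 3^3 / 2^2 by norm_num,
    Real.log_div (by norm_num) (by norm_num), Real.log_pow, Real.log_pow]
  push_cast; ring

lemma hden : 0 < 3 * Real.log 3 - 2 * Real.log 2 := by
  have h2 : (0:ℝ) < Real.log 2 := Real.log_pos (by norm_num)
  have h3 : Real.log 2 < Real.log 3 := Real.log_lt_log (by norm_num) (by norm_num)
  linarith

lemma hc2eq : c2 = 3 * Real.log 2 / (3 * Real.log 3 - 2 * Real.log 2) := by
  have h2 : (0:ℝ) < Real.log 2 := Real.log_pos (by norm_num)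
  rw [c2, logb274]
  field_simp

lemma hc2pos : 0 < c2 := by
  rw [hc2eq]
  have h2 : (0:ℝ) < Real.log 2 := Real.log_pos (by norm_num)
  exact div_pos (by linarith) hden

lemma h4 : 2 ≤ d2 + c2 * logb 2 3 := by
  have h2 : (0:ℝ) < Real.log 2 := Real.log_pos (by norm_num)
  have h3 : Real.log 2 < Real.log 3 := Real.log_lt_log (by norm_num) (by norm_num)
  have hd := hden
  rw [d2, hc2eq, Real.logb, ← sub_nonneg]
  have heq : 6 - 3 * Real.log 2 / (3 * Real.log 3 - 2 * Real.log 2) * (3 * (Real.log 3 / Real.log 2) - 1) +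
      3 * Real.log 2 / (3 * Real.log 3 - 2 * Real.log 2) * (Real.log 3 / Real.log 2) - 2
      = (6 * Real.log 3 - 5 * Real.log 2) / (3 * Real.log 3 - 2 * Real.log 2) := by
    generalize hD : 3 * Real.log 3 - 2 * Real.log 2 = D at hd ⊢
    field_simp
    rw [← hD]
    ring
  rw [heq]
  exact div_nonneg (by linarith) hd.le

/-- Lemma 7(a): if `a ≥ 2` and `A ≤ 2B` then
`A·(d₂ + c₂·log(a−1)) + A + B ≤ (A+B)·(d₂ − 1 + c₂·log(a+b))`. -/
theorem alphamerge_C_two (A B a b : ℕ)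
    (hA : 0 < A) (hB : 0 < B) (ha : 2 ≤ a) (hb : 0 < b)
    (h1 : A ≤ 2 * B) :
    (A : ℝ) * (d2 + c2 * logb 2 ((a : ℝ) - 1)) + A + B
      ≤ ((A : ℝ) + B) * (d2 - 1 + c2 * logb 2 ((a : ℝ) + b)) := by
  have h2 : (0:ℝ) < Real.log 2 := Real.log_pos (by norm_num)
  set x : ℝ := (a:ℝ) - 1 with hxdef
  set y : ℝ := (a:ℝ) + b with hydef
  have hx1 : 1 ≤ x := by
    have : (2:ℝ) ≤ a := by exact_mod_cast ha
    simp only [hxdef]; linarith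
  have hxy : x + 2 ≤ y := by
    have : (1:ℝ) ≤ b := by exact_mod_cast hb
    simp only [hxdef, hydef]; linarith
  have hxpos : 0 < x := by linarith
  have hypos : 0 < y := by linarith
  have hkey : 27 * x^2 ≤ 2 * y^3 := by
    nlinarith [mul_nonneg (sq_nonneg (x-4)) (by linarith : (0:ℝ) ≤ 2*x+1),
      pow_le_pow_left₀ (by linarith : (0:ℝ) ≤ x+2) hxy 3]
  -- log form
  have hll : 3*Real.log 3 + 2*Real.log x ≤ Real.log 2 + 3*Real.log y := by
    have := Real.log_le_log (by positivity) hkey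
    rw [Real.log_mul (by norm_num) (by positivity), Real.log_mul (by norm_num) (by positivity),
      Real.log_pow, Real.log_pow, show (27:ℝ) = 3^3 by norm_num, Real.log_pow] at this
    push_cast at this
    linarith
  have h3l : 3 * logb 2 3 - 1 ≤ 3 * logb 2 y - 2 * logb 2 x := by
    simp only [Real.logb]
    rw [← sub_nonneg]
    have heq : 3 * (Real.log y / Real.log 2) - 2 * (Real.log x / Real.log 2) -
        (3 * (Real.log 3 / Real.log 2) - 1)
        = (Real.log 2 + 3*Real.log y - (3*Real.log 3 + 2*Real.log x)) / Real.log 2 := by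
      field_simp; ring
    rw [heq]
    exact div_nonneg (by linarith) h2.le
  have hyl : logb 2 3 ≤ logb 2 y := by
    apply Real.logb_le_logb_of_le (by norm_num : (1:ℝ) < 2) (by norm_num)
    simp only [hydef]
    have h1 : (2:ℝ) ≤ a := by exact_mod_cast ha
    have h2 : (1:ℝ) ≤ b := by exact_mod_cast hb
    linarith
  have hAB : (A:ℝ) ≤ 2 * B := by exact_mod_cast h1
  have hA1 : (1:ℝ) ≤ A := by exact_mod_cast hA
  have hB1 : (1:ℝ) ≤ B := by exact_mod_cast hB
  have hd2 : d2 = 6 - c2 * (3 * logb 2 3 - 1) := rfl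
  have F1 : 0 ≤ (A:ℝ) * (c2 * (3 * logb 2 y - 2 * logb 2 x) - c2 * (3 * logb 2 3 - 1)) := by
    apply mul_nonneg (by linarith)
    rw [← mul_sub]
    exact mul_nonneg hc2pos.le (by linarith)
  have F2 : 0 ≤ (2*(B:ℝ) - A) * (c2 * logb 2 y - c2 * logb 2 3) := by
    apply mul_nonneg (by linarith)
    rw [← mul_sub]
    exact mul_nonneg hc2pos.le (by linarith)
  have F3 : 0 ≤ (2*(B:ℝ) - A) * (d2 + c2 * logb 2 3 - 2) := by
    apply mul_nonneg (by linarith)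
    linarith [h4]
  nlinarith [F1, F2, F3, hd2]
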